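/- Fix ω_c > 0, r₀ > 0 and ω_0 > ω_c, let U = {(r, θ) ∈ ℝ² : r > 0, 0 < θ < π}, and define R : U → ℝ by R(r, θ) = −r sin θ · √(ω_0² − ω_c² sin²(r/r₀)). Then R is differentiable on U, and its gradient vanishes at (r, θ) ∈ U if and only if θ = π/2 and ω_c² sin(r/r₀) (sin(r/r₀) + (r/r₀) cos(r/r₀)) = ω_0². Moreover, the set of such critical points is infinite. -/

import Mathlib

open Real

lemma clm_eq_zero_iff' (L : ℝ × ℝ →L[ℝ] ℝ) :
    L = 0 ↔ L (1, 0) = 0 ∧ L (0, 1) = 0 := by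
  constructor
  · intro h; simp [h]
  · rintro ⟨h1, h2⟩
    refine ContinuousLinearMap.ext fun v => ?_
    have hv : (v : ℝ × ℝ) = v.1 • ((1:ℝ), (0:ℝ)) + v.2 • ((0:ℝ), (1:ℝ)) := by
      simp [Prod.ext_iff]
    calc L v = L (v.1 • ((1:ℝ), (0:ℝ)) + v.2 • ((0:ℝ), (1:ℝ))) := by rw [← hv]
    _ = 0 := by rw [map_add, map_smul, map_smul, h1, h2]; simp

theorem stmt16 (ωc r0 ω0 : ℝ) (hωc : 0 < ωc) (hr0 : 0 < r0) (hω0 : ωc < ω0)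
    (U : Set (ℝ × ℝ))
    (hU : U = {q : ℝ × ℝ | 0 < q.1 ∧ 0 < q.2 ∧ q.2 < π})
    (R : ℝ × ℝ → ℝ)
    (hR : ∀ q : ℝ × ℝ,
      R q = -(q.1 * Real.sin q.2) *
        Real.sqrt (ω0 ^ 2 - ωc ^ 2 * Real.sin (q.1 / r0) ^ 2)) :
    DifferentiableOn ℝ R U ∧
    (∀ q ∈ U, fderiv ℝ R q = 0 ↔
      (q.2 = π / 2 ∧
        ωc ^ 2 * Real.sin (q.1 / r0) *
          (Real.sin (q.1 / r0) + (q.1 / r0) * Real.cos (q.1 / r0)) = ω0 ^ 2)) ∧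
    {q ∈ U | fderiv ℝ R q = 0}.Infinite := by
  -- setup
  set c : ℝ → ℝ := fun r => ω0 ^ 2 - ωc ^ 2 * Real.sin (r / r0) ^ 2 with hc
  have hcpos : ∀ r, 0 < c r := by
    intro r
    have h1 : Real.sin (r / r0) ^ 2 ≤ 1 := sin_sq_le_one _
    have h2 : 0 ≤ ωc ^ 2 := sq_nonneg _
    simp only [hc]
    nlinarith
  set cd : ℝ → ℝ := fun r => -(ωc ^ 2 * (2 * Real.sin (r / r0) * Real.cos (r / r0)) / r0) with hcd
  have hcderiv : ∀ r, HasDerivAt c (cd r) r := by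
    intro r
    have h1 : HasDerivAt (fun x : ℝ => x / r0) (1 / r0) r := by
      simpa using (hasDerivAt_id r).div_const r0
    have h2 : HasDerivAt (fun x : ℝ => Real.sin (x / r0)) (Real.cos (r / r0) * (1 / r0)) r :=
      by have := (Real.hasDerivAt_sin (r / r0)).comp r h1; exact this
    have h3 : HasDerivAt (fun x : ℝ => Real.sin (x / r0) ^ 2)
        (2 * Real.sin (r / r0) * (Real.cos (r / r0) * (1 / r0))) r := by
      simpa using h2.fun_pow 2
    have h4 := (h3.const_mul (ωc ^ 2)).const_sub (ω0 ^ 2)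
    refine h4.congr_deriv ?_
    simp only [hcd]
    ring
  set s : ℝ → ℝ := fun r => Real.sqrt (c r) with hs
  have hspos : ∀ r, 0 < s r := fun r => Real.sqrt_pos.2 (hcpos r)
  set sd : ℝ → ℝ := fun r => 1 / (2 * s r) * cd r with hsd
  have hsderiv : ∀ r, HasDerivAt s (sd r) r := by
    intro r
    exact (Real.hasDerivAt_sqrt (hcpos r).ne').comp r (hcderiv r)
  have hRs : R = fun p : ℝ × ℝ => -(p.1 * Real.sin p.2) * s p.1 := funext hR
  -- derivative
  have key : ∀ q : ℝ × ℝ, HasFDerivAt R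
      ((-(q.1 * Real.sin q.2)) • (sd q.1 • ContinuousLinearMap.fst ℝ ℝ ℝ) +
        (s q.1) • (-(q.1 • (Real.cos q.2 • ContinuousLinearMap.snd ℝ ℝ ℝ) +
          Real.sin q.2 • ContinuousLinearMap.fst ℝ ℝ ℝ))) q := by
    intro q
    have hsin : HasFDerivAt (fun p : ℝ × ℝ => Real.sin p.2)
        (Real.cos q.2 • ContinuousLinearMap.snd ℝ ℝ ℝ) q :=
      (Real.hasDerivAt_sin q.2).comp_hasFDerivAt q hasFDerivAt_snd
    have hf1 : HasFDerivAt (fun p : ℝ × ℝ => -(p.1 * Real.sin p.2))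
        (-(q.1 • (Real.cos q.2 • ContinuousLinearMap.snd ℝ ℝ ℝ) +
          Real.sin q.2 • ContinuousLinearMap.fst ℝ ℝ ℝ)) q :=
      (hasFDerivAt_fst.mul hsin).neg
    have hf2 : HasFDerivAt (fun p : ℝ × ℝ => s p.1)
        (sd q.1 • ContinuousLinearMap.fst ℝ ℝ ℝ) q :=
      (hsderiv q.1).comp_hasFDerivAt q hasFDerivAt_fst
    rw [hRs]
    exact hf1.mul hf2
  have hdiff : DifferentiableOn ℝ R U :=
    fun q _ => (key q).differentiableAt.differentiableWithinAt
  -- the characterization of critical points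
  have hiff : ∀ q ∈ U, fderiv ℝ R q = 0 ↔
      (q.2 = π / 2 ∧
        ωc ^ 2 * Real.sin (q.1 / r0) *
          (Real.sin (q.1 / r0) + (q.1 / r0) * Real.cos (q.1 / r0)) = ω0 ^ 2) := by
    intro q hq
    rw [hU] at hq
    obtain ⟨hr, hθ1, hθ2⟩ := hq
    have hfd := (key q).fderiv
    rw [hfd, clm_eq_zero_iff']
    have e1 : ((-(q.1 * Real.sin q.2)) • (sd q.1 • ContinuousLinearMap.fst ℝ ℝ ℝ) +
        (s q.1) • (-(q.1 • (Real.cos q.2 • ContinuousLinearMap.snd ℝ ℝ ℝ) +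
          Real.sin q.2 • ContinuousLinearMap.fst ℝ ℝ ℝ))) ((1:ℝ), (0:ℝ)) =
        -(Real.sin q.2) * (q.1 * sd q.1 + s q.1) := by
      simp [ContinuousLinearMap.add_apply, ContinuousLinearMap.smul_apply,
        ContinuousLinearMap.neg_apply, smul_eq_mul]
      ring
    have e2 : ((-(q.1 * Real.sin q.2)) • (sd q.1 • ContinuousLinearMap.fst ℝ ℝ ℝ) +
        (s q.1) • (-(q.1 • (Real.cos q.2 • ContinuousLinearMap.snd ℝ ℝ ℝ) +
          Real.sin q.2 • ContinuousLinearMap.fst ℝ ℝ ℝ))) ((0:ℝ), (1:ℝ)) =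
        -(s q.1 * (q.1 * Real.cos q.2)) := by
      simp [ContinuousLinearMap.add_apply, ContinuousLinearMap.smul_apply,
        ContinuousLinearMap.neg_apply, smul_eq_mul]
    rw [e1, e2]
    have hsinθ : 0 < Real.sin q.2 := Real.sin_pos_of_pos_of_lt_pi hθ1 hθ2
    have hs1 : 0 < s q.1 := hspos q.1
    have hss : s q.1 * s q.1 = c q.1 := Real.mul_self_sqrt (hcpos q.1).le
    -- second coordinate: cos q.2 = 0 ↔ q.2 = π/2
    have hcos_iff : Real.cos q.2 = 0 ↔ q.2 = π / 2 := by
      constructor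
      · intro h
        have hmem1 : q.2 ∈ Set.Icc 0 π := ⟨hθ1.le, hθ2.le⟩
        have hmem2 : π / 2 ∈ Set.Icc (0:ℝ) π := by
          constructor <;> [positivity; linarith [Real.pi_pos]]
        exact Real.injOn_cos hmem1 hmem2 (by rw [h, Real.cos_pi_div_two])
      · intro h; rw [h, Real.cos_pi_div_two]
    have hB_iff : -(s q.1 * (q.1 * Real.cos q.2)) = 0 ↔ q.2 = π / 2 := by
      rw [neg_eq_zero, mul_eq_zero, mul_eq_zero]
      constructor
      · rintro (h | h | h)
        · exact absurd h hs1.ne'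
        · exact absurd h hr.ne'
        · exact hcos_iff.1 h
      · intro h; exact Or.inr (Or.inr (hcos_iff.2 h))
    -- first coordinate
    have expand : (q.1 * sd q.1 + s q.1) * (2 * s q.1) =
        2 * (ω0 ^ 2 - ωc ^ 2 * Real.sin (q.1 / r0) *
          (Real.sin (q.1 / r0) + (q.1 / r0) * Real.cos (q.1 / r0))) := by
      have h0 : s q.1 ≠ 0 := hs1.ne'
      have h1 : (q.1 * sd q.1 + s q.1) * (2 * s q.1) = q.1 * cd q.1 + 2 * c q.1 := by
        simp only [hsd]
        field_simp
        linear_combination 2 * hss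
      rw [h1]
      simp only [hcd, hc]
      field_simp
      ring
    have hA_iff : -(Real.sin q.2) * (q.1 * sd q.1 + s q.1) = 0 ↔
        ωc ^ 2 * Real.sin (q.1 / r0) *
          (Real.sin (q.1 / r0) + (q.1 / r0) * Real.cos (q.1 / r0)) = ω0 ^ 2 := by
      rw [mul_eq_zero]
      constructor
      · rintro (h | h)
        · exact absurd (neg_eq_zero.1 h) hsinθ.ne'
        · have := expand
          rw [h, zero_mul] at this
          linarith
      · intro h
        refine Or.inr ?_
        have h2 : (q.1 * sd q.1 + s q.1) * (2 * s q.1) = 0 := by rw [expand, h]; ring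
        rcases mul_eq_zero.1 h2 with h3 | h3
        · exact h3
        · exact absurd h3 (by positivity)
    rw [hA_iff, hB_iff, and_comm]
  refine ⟨hdiff, hiff, ?_⟩
  -- infinitude
  set φ : ℝ → ℝ := fun x => ωc ^ 2 * Real.sin x * (Real.sin x + x * Real.cos x) with hφ
  have hcont : Continuous φ := by fun_prop
  obtain ⟨N, hN⟩ := exists_nat_gt (2 * ω0 ^ 2 / ωc ^ 2)
  set a : ℕ → ℝ := fun n => (n + N + 1 : ℕ) * (2 * π) with ha
  set b : ℕ → ℝ := fun n => π / 4 + (n + N + 1 : ℕ) * (2 * π) with hb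
  have hπ := Real.pi_gt_three
  have hab : ∀ n, a n ≤ b n := by
    intro n; simp only [ha, hb]; nlinarith
  have hφa : ∀ n, φ (a n) = 0 := by
    intro n
    have h0 : Real.sin (a n) = 0 := by
      simp only [ha]
      have := Real.sin_add_int_mul_two_pi 0 ((n + N + 1 : ℕ) : ℤ)
      push_cast at this ⊢
      simpa using this
    simp [hφ, h0]
  have hφb : ∀ n, ω0 ^ 2 ≤ φ (b n) := by
    intro n
    have hsin : Real.sin (b n) = Real.sqrt 2 / 2 := by
      simp only [hb]
      have := Real.sin_add_int_mul_two_pi (π / 4) ((n + N + 1 : ℕ) : ℤ)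
      push_cast at this ⊢
      rw [this, Real.sin_pi_div_four]
    have hcos : Real.cos (b n) = Real.sqrt 2 / 2 := by
      simp only [hb]
      have := Real.cos_add_int_mul_two_pi (π / 4) ((n + N + 1 : ℕ) : ℤ)
      push_cast at this ⊢
      rw [this, Real.cos_pi_div_four]
    have h2 : Real.sqrt 2 / 2 * (Real.sqrt 2 / 2) = 1 / 2 := by
      rw [div_mul_div_comm, Real.mul_self_sqrt (by norm_num)]; norm_num
    have hbn : 2 * (N : ℝ) ≤ b n := by
      simp only [hb]
      have hn0 : (N : ℝ) ≤ ((n + N + 1 : ℕ) : ℝ) := by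
        push_cast; linarith [Nat.cast_nonneg (α := ℝ) n]
      nlinarith
    have hφbval : φ (b n) = ωc ^ 2 * (1 / 2) * (1 + b n) := by
      simp only [hφ, hsin, hcos]
      linear_combination (ωc ^ 2 * (1 + b n)) * h2
    rw [hφbval]
    have hωc2 : (0:ℝ) < ωc ^ 2 := by positivity
    have hthis : 2 * ω0 ^ 2 < (N : ℝ) * ωc ^ 2 := by
      rw [div_lt_iff₀ hωc2] at hN; linarith
    have hmul := mul_le_mul_of_nonneg_left hbn hωc2.le
    have e1 : ωc ^ 2 * (1 / 2) * (1 + b n) = ωc ^ 2 / 2 + (ωc ^ 2 * b n) / 2 := by ring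
    have e2 : ωc ^ 2 * (2 * (N:ℝ)) = 2 * ((N:ℝ) * ωc ^ 2) := by ring
    rw [e1]
    rw [e2] at hmul
    generalize hB : b n = B at hmul ⊢
    linarith [sq_nonneg ω0, hωc2, hmul, hthis]
  have H : ∀ n : ℕ, ∃ x, x ∈ Set.Icc (a n) (b n) ∧ φ x = ω0 ^ 2 := by
    intro n
    have hiv := intermediate_value_Icc (hab n) hcont.continuousOn
    have hmem : ω0 ^ 2 ∈ Set.Icc (φ (a n)) (φ (b n)) := by
      constructor
      · rw [hφa n]; positivity
      · exact hφb n
    obtain ⟨x, hx1, hx2⟩ := hiv hmem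
    exact ⟨x, hx1, hx2⟩
  choose x hx1 hx2 using H
  have hxpos : ∀ n, 0 < x n := by
    intro n
    have h0 : 0 < a n := by simp only [ha]; positivity
    linarith [(hx1 n).1]
  have hxmono : StrictMono x := by
    intro m n hmn
    have h1 : x m ≤ b m := (hx1 m).2
    have h2 : a n ≤ x n := (hx1 n).1
    have h3 : b m < a n := by
      simp only [ha, hb]
      have : (m : ℝ) + 1 ≤ (n : ℝ) := by exact_mod_cast hmn
      push_cast
      nlinarith
    linarith
  refine Set.infinite_of_injective_forall_mem
    (f := fun n : ℕ => ((r0 * x n, π / 2) : ℝ × ℝ)) ?_ ?_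
  · intro m n hmn
    simp only [Prod.mk.injEq] at hmn
    have := mul_left_cancel₀ hr0.ne' hmn.1
    exact hxmono.injective this
  · intro n
    have hq1 : (0:ℝ) < r0 * x n := mul_pos hr0 (hxpos n)
    have hqU : ((r0 * x n, π / 2) : ℝ × ℝ) ∈ U := by
      rw [hU]
      simp only [Set.mem_setOf_eq]
      exact ⟨hq1, by positivity, by linarith [Real.pi_pos]⟩
    refine ⟨hqU, ?_⟩
    rw [hiff _ hqU]
    refine ⟨rfl, ?_⟩
    have hdiv : (r0 * x n : ℝ) / r0 = x n := by
      rw [mul_comm, mul_div_assoc, div_self hr0.ne', mul_one]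
    rw [hdiv]
    exact hx2 n
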